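/- arXiv:2502.06436 — 2 statements merged into one kernel-verified Lean document; each statement's English description precedes it below -/
import Mathlib

section
/- Let X = φ^{-1}(0) ⊆ (ℂ^n,0) be a complex hypersurface germ and f : (ℂ^n,0)→(ℂ,0) a holomorphic germ with an isolated singularity at 0. Then dim_ℂ df(Θ_X)/df(Θ_X^0) = s, where s is the dimension of the ℂ-linear span of {η(0) : η ∈ Θ_X} in ℂ^n. -/
open Filter Topology

/-- `ℂ^n`. -/
abbrev Cn (n : ℕ) := Fin n → ℂ

/-- The `i`-th partial derivative of `f : ℂ^n → ℂ` at `x`. -/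
noncomputable def pdC {n : ℕ} (i : Fin n) (f : Cn n → ℂ) (x : Cn n) : ℂ :=
  fderiv ℂ f x (Pi.single i 1)

/-- `f` has an isolated singularity at `0`. -/
def IsolatedSingAt {n : ℕ} (f : Cn n → ℂ) : Prop :=
  (∀ i, pdC i f 0 = 0) ∧ ∀ᶠ x in 𝓝 (0 : Cn n), (∀ i, pdC i f x = 0) → x = 0

/-- A (representative of a) germ at `0` of holomorphic vector field tangent to the
hypersurface `X = φ⁻¹(0)`: each component is holomorphic at `0` and
`η(φ) = Σ_i η_i ∂φ/∂x_i` lies in the ideal `(φ)`. -/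
def TangentVF {n : ℕ} (φ : Cn n → ℂ) (η : Cn n → Cn n) : Prop :=
  (∀ i, AnalyticAt ℂ (fun x => η x i) 0) ∧
  ∃ h : Cn n → ℂ, AnalyticAt ℂ h 0 ∧
    ∀ᶠ x in 𝓝 (0 : Cn n), (∑ i, η x i * pdC i φ x) = h x * φ x

/-- The space of germs at `0` of functions `ℂ^n → ℂ`. -/
abbrev GermC (n : ℕ) := Filter.Germ (𝓝 (0 : Cn n)) ℂ

/-- `df(Θ_X)` as a `ℂ`-subspace of the space of germs at `0`. -/
noncomputable def dfThetaX {n : ℕ} (φ f : Cn n → ℂ) : Submodule ℂ (GermC n) :=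
  Submodule.span ℂ
    {g | ∃ η, TangentVF φ η ∧ ((fun x => ∑ i, η x i * pdC i f x : Cn n → ℂ) : GermC n) = g}

/-- `df(Θ_X^0)` as a `ℂ`-subspace of the space of germs at `0`. -/
noncomputable def dfThetaX0 {n : ℕ} (φ f : Cn n → ℂ) : Submodule ℂ (GermC n) :=
  Submodule.span ℂ
    {g | ∃ η, TangentVF φ η ∧ η 0 = 0 ∧
      ((fun x => ∑ i, η x i * pdC i f x : Cn n → ℂ) : GermC n) = g}

variable {n : ℕ}

lemma pdC_analyticAt {f : Cn n → ℂ} {x : Cn n} (hf : AnalyticAt ℂ f x) (i : Fin n) :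
    AnalyticAt ℂ (pdC i f) x :=
  (((ContinuousLinearMap.apply ℂ ℂ (Pi.single i 1)).analyticAt _).comp hf.fderiv : )

lemma fderiv_apply_eq_sum {f : Cn n → ℂ} {x : Cn n} (hf : DifferentiableAt ℂ f x) (v : Cn n) :
    fderiv ℂ f x v = ∑ i, v i * pdC i f x := by
  have hv : v = ∑ i, v i • (Pi.single i 1 : Cn n) := by
    funext j
    simp [Pi.single_apply, Finset.sum_apply]
  conv_lhs => rw [hv]
  rw [map_sum]
  simp [pdC, smul_eq_mul]

lemma pdC_pdC_eq {f : Cn n → ℂ} {x : Cn n} (hf : AnalyticAt ℂ f x) (i j : Fin n) :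
    pdC i (pdC j f) x = fderiv ℂ (fderiv ℂ f) x (Pi.single i 1) (Pi.single j 1) := by
  have h1 : pdC j f = fun y => fderiv ℂ f y (Pi.single j 1) := rfl
  have hd : DifferentiableAt ℂ (fderiv ℂ f) x := hf.fderiv.differentiableAt
  rw [pdC, h1, fderiv_clm_apply hd (differentiableAt_const _)]
  simp

lemma pdC_symm {f : Cn n → ℂ} {x : Cn n} (hf : AnalyticAt ℂ f x) (i j : Fin n) :
    pdC i (pdC j f) x = pdC j (pdC i f) x := by
  rw [pdC_pdC_eq hf i j, pdC_pdC_eq hf j i]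
  exact (hf.contDiffAt (n := 2)).isSymmSndFDerivAt (by norm_num) _ _

lemma deriv_rel {f : Cn n → ℂ} {ξ : Cn n → Cn n} {x : Cn n}
    (hf : AnalyticAt ℂ f x) (hξ : ∀ i, AnalyticAt ℂ (fun y => ξ y i) x)
    (hrel : (fun y => ∑ i, ξ y i * pdC i f y) =ᶠ[𝓝 x] (fun _ => (0:ℂ))) (j : Fin n) :
    ∑ i, ξ x i * pdC j (pdC i f) x = - ∑ i, pdC j (fun y => ξ y i) x * pdC i f x := by
  have hd1 : ∀ i : Fin n, DifferentiableAt ℂ (fun y => ξ y i) x :=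
    fun i => (hξ i).differentiableAt
  have hd2 : ∀ i : Fin n, DifferentiableAt ℂ (pdC i f) x :=
    fun i => (pdC_analyticAt hf i).differentiableAt
  have hF : fderiv ℂ (fun y => ∑ i, ξ y i * pdC i f y) x = 0 := by
    rw [hrel.fderiv_eq]; simp
  have hsum : fderiv ℂ (fun y => ∑ i, ξ y i * pdC i f y) x
      = ∑ i, fderiv ℂ (fun y => ξ y i * pdC i f y) x := by
    rw [fderiv_fun_sum (A := fun i y => ξ y i * pdC i f y) (fun i _ => ((hd1 i).mul (hd2 i)))]
  have h0 : (0:ℂ) = ∑ i, (ξ x i * pdC j (pdC i f) x + pdC i f x * pdC j (fun y => ξ y i) x) := by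
    have h := congrArg (fun (L : Cn n →L[ℂ] ℂ) => L (Pi.single j 1)) (hsum.symm.trans hF)
    simp only [ContinuousLinearMap.zero_apply, ContinuousLinearMap.sum_apply] at h
    rw [← h]
    refine (Finset.sum_congr rfl fun i _ => ?_).symm
    rw [fderiv_fun_mul (hd1 i) (hd2 i)]
    simp only [ContinuousLinearMap.add_apply, ContinuousLinearMap.smul_apply, smul_eq_mul, pdC]
    try ring
  rw [Finset.sum_add_distrib] at h0
  have h1 := eq_neg_of_add_eq_zero_left h0.symm
  rw [h1]
  rw [neg_inj]
  exact Finset.sum_congr rfl fun i _ => mul_comm _ _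


lemma key {f : Cn n → ℂ} (hf : AnalyticAt ℂ f 0) (hiso : IsolatedSingAt f)
    {ξ : Cn n → Cn n} (hξ : ∀ i, AnalyticAt ℂ (fun x => ξ x i) 0)
    (hrel : ∀ᶠ x in 𝓝 (0:Cn n), ∑ i, ξ x i * pdC i f x = 0) : ξ 0 = 0 := by
  -- gather local data on an open set U
  have hev : ∀ᶠ x in 𝓝 (0:Cn n), AnalyticAt ℂ f x ∧ (∀ i, AnalyticAt ℂ (fun y => ξ y i) x) ∧
      ((fun y => ∑ i, ξ y i * pdC i f y) =ᶠ[𝓝 x] (fun _ => (0:ℂ))) ∧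
      ((∀ i, pdC i f x = 0) → x = 0) := by
    have h1 := hf.eventually_analyticAt
    have h2 : ∀ᶠ x in 𝓝 (0:Cn n), ∀ i, AnalyticAt ℂ (fun y => ξ y i) x :=
      (Filter.eventually_all).2 fun i => (hξ i).eventually_analyticAt
    have h3 : ∀ᶠ x in 𝓝 (0:Cn n),
        (fun y => ∑ i, ξ y i * pdC i f y) =ᶠ[𝓝 x] (fun _ => (0:ℂ)) := hrel.eventually_nhds
    filter_upwards [h1, h2, h3, hiso.2] with x a b c d using ⟨a, b, c, d⟩
  obtain ⟨U, hUsub, hUopen, hU0⟩ := mem_nhds_iff.1 hev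
  -- the vector field is C¹ over ℝ at 0
  have hξC : ContDiffAt ℝ 1 ξ 0 := by
    have h : AnalyticAt ℂ ξ 0 := analyticAt_pi_iff.2 hξ
    exact (h.restrictScalars.contDiffAt : ContDiffAt ℝ 1 ξ 0)
  obtain ⟨γ, hγ0, ε, hε, hγ'⟩ := hξC.exists_forall_mem_closedBall_exists_eq_forall_mem_Ioo_hasDerivAt₀ 0
  -- choose b > 0 with Icc 0 b ⊆ Ioo (-ε) ε and γ '' (Icc 0 b) ⊆ U
  have hγc0 : ContinuousAt γ 0 := (hγ' 0 (by simp [hε])).continuousAt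
  have hUmem : U ∈ 𝓝 (γ 0) := hUopen.mem_nhds (hγ0 ▸ hU0)
  obtain ⟨δ, hδ, hδsub⟩ := Metric.mem_nhds_iff.1 (hγc0.preimage_mem_nhds hUmem)
  set b := min (ε/2) (δ/2) with hbdef
  have hb : 0 < b := lt_min (by linarith) (by linarith)
  have hIccIoo : Set.Icc (0:ℝ) b ⊆ Set.Ioo (-ε) ε := fun t ht =>
    ⟨by cases ht; linarith, by
      have : t ≤ b := ht.2
      have : b ≤ ε/2 := min_le_left _ _
      linarith [ht.2]⟩
  have hγU : ∀ t ∈ Set.Icc (0:ℝ) b, γ t ∈ U := by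
    intro t ht
    apply hδsub
    have : |t| < δ := by
      rw [abs_of_nonneg ht.1]
      have : b ≤ δ/2 := min_le_right _ _
      linarith [ht.2]
    simpa [Real.dist_eq] using this
  -- the gradient along the flow
  set g : ℝ → Cn n := fun t => fun j => pdC j f (γ t) with hgdef
  set g' : ℝ → Cn n := fun t =>
    fun j => -∑ i, pdC j (fun y => ξ y i) (γ t) * pdC i f (γ t) with hg'def
  have hg0 : g 0 = 0 := by
    funext j
    simp [hgdef, hγ0, hiso.1 j]
  have hgderiv : ∀ t ∈ Set.Icc (0:ℝ) b, HasDerivAt g (g' t) t := by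
    intro t ht
    obtain ⟨PA, PB, PC, -⟩ := hUsub (hγU t ht)
    have hγt : HasDerivAt γ (ξ (γ t)) t := hγ' t (by simpa using hIccIoo ht)
    rw [hasDerivAt_pi]
    intro j
    have hA : AnalyticAt ℂ (pdC j f) (γ t) := pdC_analyticAt PA j
    have hDc : HasFDerivAt (pdC j f) (fderiv ℂ (pdC j f) (γ t)) (γ t) :=
      hA.differentiableAt.hasFDerivAt
    have hcomp := (hDc.restrictScalars ℝ).comp_hasDerivAt t hγt
    have hval : (fderiv ℂ (pdC j f) (γ t)).restrictScalars ℝ (ξ (γ t)) = g' t j := by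
      have h1 : (fderiv ℂ (pdC j f) (γ t)).restrictScalars ℝ (ξ (γ t))
          = fderiv ℂ (pdC j f) (γ t) (ξ (γ t)) := rfl
      rw [h1, fderiv_apply_eq_sum hA.differentiableAt]
      have h2 : ∀ i : Fin n, pdC i (pdC j f) (γ t) = pdC j (pdC i f) (γ t) :=
        fun i => pdC_symm PA i j
      calc ∑ i, ξ (γ t) i * pdC i (pdC j f) (γ t)
          = ∑ i, ξ (γ t) i * pdC j (pdC i f) (γ t) := by
            exact Finset.sum_congr rfl fun i _ => by rw [h2 i]
        _ = - ∑ i, pdC j (fun y => ξ y i) (γ t) * pdC i f (γ t) := deriv_rel PA PB PC j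
        _ = g' t j := rfl
    exact hval ▸ hcomp
  -- a bound for the coefficient matrix on the compact interval
  set M : ℝ → ℝ := fun t => ∑ j : Fin n, ∑ i : Fin n,
    ‖pdC j (fun y => ξ y i) (γ t)‖ with hMdef
  have hγcont : ContinuousOn γ (Set.Icc (0:ℝ) b) := fun t ht =>
    ((hγ' t (by simpa using hIccIoo ht)).continuousAt).continuousWithinAt
  have hMcont : ContinuousOn M (Set.Icc (0:ℝ) b) := by
    apply continuousOn_finset_sum
    intro j _
    apply continuousOn_finset_sum
    intro i _
    apply ContinuousOn.norm
    intro t ht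
    obtain ⟨-, PB, -, -⟩ := hUsub (hγU t ht)
    exact ((pdC_analyticAt (PB i) j).continuousAt.comp_continuousWithinAt (hγcont t ht))
  obtain ⟨K, hK⟩ := (isCompact_Icc).exists_bound_of_continuousOn hMcont
  have hK0 : ∀ t ∈ Set.Icc (0:ℝ) b, M t ≤ K := fun t ht =>
    (le_abs_self _).trans (by simpa [Real.norm_eq_abs] using hK t ht)
  -- Grönwall
  have hgcont : ContinuousOn g (Set.Icc (0:ℝ) b) := fun t ht =>
    ((hgderiv t ht).continuousAt).continuousWithinAt
  have hbound : ∀ t ∈ Set.Ico (0:ℝ) b, ‖g' t‖ ≤ K * ‖g t‖ + 0 := by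
    intro t ht
    have ht' : t ∈ Set.Icc (0:ℝ) b := ⟨ht.1, ht.2.le⟩
    rw [add_zero]
    have hKnn : 0 ≤ K * ‖g t‖ := by
      have hM0 : (0:ℝ) ≤ M t := Finset.sum_nonneg fun j _ =>
        Finset.sum_nonneg fun i _ => norm_nonneg _
      exact mul_nonneg (hM0.trans (hK0 t ht')) (norm_nonneg _)
    rw [pi_norm_le_iff_of_nonneg hKnn]
    intro j
    calc ‖g' t j‖ = ‖∑ i, pdC j (fun y => ξ y i) (γ t) * pdC i f (γ t)‖ := by
          rw [hg'def]; simp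
      _ ≤ ∑ i, ‖pdC j (fun y => ξ y i) (γ t) * pdC i f (γ t)‖ := norm_sum_le _ _
      _ ≤ ∑ i, ‖pdC j (fun y => ξ y i) (γ t)‖ * ‖g t‖ := by
          apply Finset.sum_le_sum
          intro i _
          rw [norm_mul]
          exact mul_le_mul_of_nonneg_left (norm_le_pi_norm (g t) i) (norm_nonneg _)
      _ = (∑ i, ‖pdC j (fun y => ξ y i) (γ t)‖) * ‖g t‖ := by rw [Finset.sum_mul]
      _ ≤ M t * ‖g t‖ := by
          apply mul_le_mul_of_nonneg_right _ (norm_nonneg _)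
          exact Finset.single_le_sum (f := fun j => ∑ i, ‖pdC j (fun y => ξ y i) (γ t)‖)
            (fun j _ => Finset.sum_nonneg fun i _ => norm_nonneg _) (Finset.mem_univ j)
      _ ≤ K * ‖g t‖ := mul_le_mul_of_nonneg_right (hK0 t ht') (norm_nonneg _)
  have hgzero : ∀ t ∈ Set.Icc (0:ℝ) b, g t = 0 := by
    intro t ht
    have := norm_le_gronwallBound_of_norm_deriv_right_le (δ := 0) (K := K) (ε := 0) hgcont
      (fun s hs => (hgderiv s ⟨hs.1, hs.2.le⟩).hasDerivWithinAt)
      (by simp [hg0]) hbound t ht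
    rw [gronwallBound_ε0_δ0] at this
    exact norm_le_zero_iff.1 this
  -- hence γ vanishes on [0, b]
  have hγzero : ∀ t ∈ Set.Icc (0:ℝ) b, γ t = 0 := by
    intro t ht
    obtain ⟨-, -, -, PD⟩ := hUsub (hγU t ht)
    apply PD
    intro i
    have := congrFun (hgzero t ht) i
    simpa [hgdef] using this
  -- derivative uniqueness at 0 within the interval
  have h1 : HasDerivWithinAt γ (ξ 0) (Set.Icc (0:ℝ) b) 0 := by
    have := (hγ' 0 (by simp [hε])).hasDerivWithinAt (s := Set.Icc (0:ℝ) b)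
    rwa [hγ0] at this
  have h2 : HasDerivWithinAt γ (0 : Cn n) (Set.Icc (0:ℝ) b) 0 := by
    have hc : HasDerivWithinAt (fun _ : ℝ => (0 : Cn n)) 0 (Set.Icc (0:ℝ) b) 0 :=
      hasDerivWithinAt_const _ _ _
    exact hc.congr (fun t ht => hγzero t ht) hγ0
  have huniq : UniqueDiffWithinAt ℝ (Set.Icc (0:ℝ) b) 0 :=
    uniqueDiffOn_Icc hb 0 ⟨le_refl 0, hb.le⟩
  have := huniq.eq h1.hasFDerivWithinAt h2.hasFDerivWithinAt
  have := congrArg (fun L : ℝ →L[ℝ] Cn n => L 1) this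
  simpa using this

section algebra
variable {φ f : Cn n → ℂ}

/-- The germ of `df(η)`. -/
noncomputable def dfg (f : Cn n → ℂ) (η : Cn n → Cn n) : GermC n :=
  ((fun x => ∑ i, η x i * pdC i f x : Cn n → ℂ) : GermC n)

lemma tvf_zero : TangentVF φ (fun _ => (0 : Cn n)) := by
  refine ⟨fun i => by simpa using analyticAt_const (v := (0:ℂ)), fun _ => 0, analyticAt_const, ?_⟩
  filter_upwards with x
  simp

lemma tvf_add {η ζ : Cn n → Cn n} (hη : TangentVF φ η) (hζ : TangentVF φ ζ) :
    TangentVF φ (fun x => η x + ζ x) := by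
  obtain ⟨hη1, h₁, hh₁, hr₁⟩ := hη
  obtain ⟨hζ1, h₂, hh₂, hr₂⟩ := hζ
  refine ⟨fun i => ((hη1 i).add (hζ1 i) : ), fun x => h₁ x + h₂ x, hh₁.add hh₂, ?_⟩
  filter_upwards [hr₁, hr₂] with x e₁ e₂
  simp only [Pi.add_apply, add_mul, Finset.sum_add_distrib, e₁, e₂]
  try ring

lemma tvf_smul (c : ℂ) {η : Cn n → Cn n} (hη : TangentVF φ η) :
    TangentVF φ (fun x => c • η x) := by
  obtain ⟨hη1, h₁, hh₁, hr₁⟩ := hη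
  refine ⟨fun i => ((analyticAt_const (v := c)).mul (hη1 i) : ), fun x => c * h₁ x,
    analyticAt_const.mul hh₁, ?_⟩
  filter_upwards [hr₁] with x e₁
  simp only [Pi.smul_apply, smul_eq_mul, mul_assoc, ← Finset.mul_sum, e₁]
  try ring

lemma dfg_add (η ζ : Cn n → Cn n) :
    dfg f (fun x => η x + ζ x) = dfg f η + dfg f ζ := by
  have : ((fun x => ∑ i, (η x + ζ x) i * pdC i f x : Cn n → ℂ))
      = fun x => (∑ i, η x i * pdC i f x) + ∑ i, ζ x i * pdC i f x := by
    funext x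
    simp [Pi.add_apply, add_mul, Finset.sum_add_distrib]
  rw [dfg, dfg, dfg, this]
  rfl

lemma dfg_smul (c : ℂ) (η : Cn n → Cn n) :
    dfg f (fun x => c • η x) = c • dfg f η := by
  have : ((fun x => ∑ i, (c • η x) i * pdC i f x : Cn n → ℂ))
      = fun x => c * ∑ i, η x i * pdC i f x := by
    funext x
    simp [Finset.mul_sum, mul_assoc]
  rw [dfg, dfg, this]
  rfl

/-- `df(Θ_X)` as an honest submodule. -/
noncomputable def TXsub (φ f : Cn n → ℂ) : Submodule ℂ (GermC n) where
  carrier := {g | ∃ η, TangentVF φ η ∧ dfg f η = g}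
  zero_mem' := ⟨fun _ => 0, tvf_zero, by
    rw [dfg]
    have : ((fun x => ∑ i, (0:Cn n) i * pdC i f x : Cn n → ℂ)) = fun _ => (0:ℂ) := by
      funext x; simp
    rw [this]; rfl⟩
  add_mem' := by
    rintro g₁ g₂ ⟨η₁, hη₁, rfl⟩ ⟨η₂, hη₂, rfl⟩
    exact ⟨fun x => η₁ x + η₂ x, tvf_add hη₁ hη₂, dfg_add η₁ η₂⟩
  smul_mem' := by
    rintro c g ⟨η, hη, rfl⟩
    exact ⟨fun x => c • η x, tvf_smul c hη, dfg_smul c η⟩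

/-- `df(Θ_X^0)` as an honest submodule. -/
noncomputable def TX0sub (φ f : Cn n → ℂ) : Submodule ℂ (GermC n) where
  carrier := {g | ∃ η, TangentVF φ η ∧ η 0 = 0 ∧ dfg f η = g}
  zero_mem' := ⟨fun _ => 0, tvf_zero, rfl, by
    rw [dfg]
    have : ((fun x => ∑ i, (0:Cn n) i * pdC i f x : Cn n → ℂ)) = fun _ => (0:ℂ) := by
      funext x; simp
    rw [this]; rfl⟩
  add_mem' := by
    rintro g₁ g₂ ⟨η₁, hη₁, h01, rfl⟩ ⟨η₂, hη₂, h02, rfl⟩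
    exact ⟨fun x => η₁ x + η₂ x, tvf_add hη₁ hη₂, by simp [h01, h02], dfg_add η₁ η₂⟩
  smul_mem' := by
    rintro c g ⟨η, hη, h0, rfl⟩
    exact ⟨fun x => c • η x, tvf_smul c hη, by simp [h0], dfg_smul c η⟩

/-- span of the evaluations as an honest submodule. -/
noncomputable def Svsub (φ : Cn n → ℂ) : Submodule ℂ (Cn n) where
  carrier := {y | ∃ η, TangentVF φ η ∧ η 0 = y}
  zero_mem' := ⟨fun _ => 0, tvf_zero, rfl⟩
  add_mem' := by
    rintro y₁ y₂ ⟨η₁, hη₁, rfl⟩ ⟨η₂, hη₂, rfl⟩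
    exact ⟨fun x => η₁ x + η₂ x, tvf_add hη₁ hη₂, rfl⟩
  smul_mem' := by
    rintro c y ⟨η, hη, rfl⟩
    exact ⟨fun x => c • η x, tvf_smul c hη, rfl⟩

lemma dfThetaX_eq (φ f : Cn n → ℂ) : dfThetaX φ f = TXsub φ f := by
  rw [dfThetaX]
  exact Submodule.span_eq (TXsub φ f)

lemma dfThetaX0_eq (φ f : Cn n → ℂ) : dfThetaX0 φ f = TX0sub φ f := by
  rw [dfThetaX0]
  exact Submodule.span_eq (TX0sub φ f)

lemma span_Sv_eq (φ : Cn n → ℂ) :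
    Submodule.span ℂ {y : Cn n | ∃ η, TangentVF φ η ∧ η 0 = y} = Svsub φ :=
  Submodule.span_eq (Svsub φ)

end algebra

lemma eval_eq {f : Cn n → ℂ} (hf : AnalyticAt ℂ f 0) (hiso : IsolatedSingAt f)
    {η ζ : Cn n → Cn n}
    (hη : ∀ i, AnalyticAt ℂ (fun x => η x i) 0) (hζ : ∀ i, AnalyticAt ℂ (fun x => ζ x i) 0)
    (h : dfg f η = dfg f ζ) : η 0 = ζ 0 := by
  have hev : (fun x => ∑ i, η x i * pdC i f x) =ᶠ[𝓝 (0:Cn n)]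
      (fun x => ∑ i, ζ x i * pdC i f x) := Filter.Germ.coe_eq.1 h
  have hkey : (fun x => η x - ζ x) 0 = 0 := by
    apply key hf hiso (ξ := fun x => η x - ζ x)
      (fun i => ((hη i).sub (hζ i) : ))
    filter_upwards [hev] with x e
    simp only [Pi.sub_apply, sub_mul, Finset.sum_sub_distrib, e, sub_self]
  have := sub_eq_zero.1 hkey
  exact this


/-- For a hypersurface germ `X = φ⁻¹(0) ⊆ (ℂ^n,0)` and a holomorphic
germ `f` with isolated singularity at `0`, `dim_ℂ df(Θ_X)/df(Θ_X^0) = s`, where `s` is the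
dimension of the span of `{η(0) : η ∈ Θ_X}` in `ℂ^n`. -/
theorem statement1 (n : ℕ) (φ f : Cn n → ℂ)
    (hφ : AnalyticAt ℂ φ 0) (hφ0 : φ 0 = 0)
    (hf : AnalyticAt ℂ f 0) (hf0 : f 0 = 0)
    (hiso : IsolatedSingAt f) :
    Module.finrank ℂ
        ((dfThetaX φ f) ⧸ (Submodule.comap (dfThetaX φ f).subtype (dfThetaX0 φ f))) =
      Module.finrank ℂ
        (Submodule.span ℂ {y : Cn n | ∃ η, TangentVF φ η ∧ η 0 = y}) := by
  classical
  have hmem : ∀ g : (dfThetaX φ f), ∃ η, TangentVF φ η ∧ dfg f η = (g : GermC n) := by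
    intro g
    exact (dfThetaX_eq φ f).le g.2
  set pk : (dfThetaX φ f) → (Cn n → Cn n) := fun g => Classical.choose (hmem g) with hpkdef
  have hpk : ∀ g, TangentVF φ (pk g) ∧ dfg f (pk g) = (g : GermC n) :=
    fun g => Classical.choose_spec (hmem g)
  have heval : ∀ {η ζ : Cn n → Cn n}, TangentVF φ η → TangentVF φ ζ →
      dfg f η = dfg f ζ → η 0 = ζ 0 := fun hη hζ h => eval_eq hf hiso hη.1 hζ.1 h
  -- the evaluation linear map
  set L : (dfThetaX φ f) →ₗ[ℂ] Cn n :=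
    { toFun := fun g => pk g 0
      map_add' := by
        intro g h
        have h1 : dfg f (pk (g + h)) = dfg f (fun x => pk g x + pk h x) := by
          rw [(hpk (g + h)).2, dfg_add, (hpk g).2, (hpk h).2]
          rfl
        exact heval (hpk (g + h)).1 (tvf_add (hpk g).1 (hpk h).1) h1
      map_smul' := by
        intro c g
        have h1 : dfg f (pk (c • g)) = dfg f (fun x => c • pk g x) := by
          rw [(hpk (c • g)).2, dfg_smul, (hpk g).2]
          rfl
        exact heval (hpk (c • g)).1 (tvf_smul c (hpk g).1) h1 } with hLdef
  have hker : LinearMap.ker L = Submodule.comap (dfThetaX φ f).subtype (dfThetaX0 φ f) := by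
    ext g
    simp only [LinearMap.mem_ker, Submodule.mem_comap, Submodule.subtype_apply]
    rw [dfThetaX0_eq]
    constructor
    · intro h0
      exact ⟨pk g, (hpk g).1, h0, (hpk g).2⟩
    · rintro ⟨ζ, hζ, hζ0, hζg⟩
      have : pk g 0 = ζ 0 := heval (hpk g).1 hζ ((hpk g).2.trans hζg.symm)
      rw [hLdef]
      simpa [this] using hζ0
  have hrange : LinearMap.range L = Submodule.span ℂ {y : Cn n | ∃ η, TangentVF φ η ∧ η 0 = y} := by
    rw [span_Sv_eq]
    ext y
    constructor
    · rintro ⟨g, rfl⟩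
      exact ⟨pk g, (hpk g).1, rfl⟩
    · rintro ⟨η, hη, hη0⟩
      have hmem' : dfg f η ∈ dfThetaX φ f := by
        rw [dfThetaX_eq]
        exact ⟨η, hη, rfl⟩
      refine ⟨⟨dfg f η, hmem'⟩, ?_⟩
      have : pk ⟨dfg f η, hmem'⟩ 0 = η 0 := heval (hpk _).1 hη (hpk _).2
      rw [hLdef]
      simpa [this] using hη0
  rw [← hker, ← hrange]
  exact LinearEquiv.finrank_eq (LinearMap.quotKerEquivRange L)
end

section
/- Let X = φ^{-1}(0) ⊆ (ℂ^n,0) be a complex hypersurface germ and f : (ℂ^n,0)→(ℂ,0) a holomorphic germ with an isolated singularity at 0 such that μ_BR(f,X) is finite. Then ℛ_X-cod(f) = μ_BR(f,X) + s − 1, where s is the dimension of the ℂ-linear span of {η(0) : η ∈ Θ_X} in ℂ^n. -/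
open Filter Topology

namespace S2aux

/-- coercion to germs as a linear map -/
noncomputable def germCoe (n : ℕ) : (Cn n → ℂ) →ₗ[ℂ] GermC n where
  toFun f := (f : GermC n)
  map_add' f g := Filter.Germ.coe_add f g
  map_smul' c f := Filter.Germ.coe_smul c f

@[simp] lemma germCoe_apply {n : ℕ} (f : Cn n → ℂ) : germCoe n f = (f : GermC n) := rfl

/-- evaluation of a germ at the base point -/
noncomputable def evalGerm (n : ℕ) : GermC n →ₗ[ℂ] ℂ where
  toFun g := Filter.Germ.liftOn g (fun f => f 0) (fun f g h => h.eq_of_nhds)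
  map_add' a b := a.inductionOn₂ b fun f g => rfl
  map_smul' c a := a.inductionOn fun f => rfl

@[simp] lemma evalGerm_coe {n : ℕ} (f : Cn n → ℂ) : evalGerm n (f : GermC n) = f 0 := rfl

/-- `η ↦ df(η)` as a linear map on vector fields -/
noncomputable def dfL {n : ℕ} (f : Cn n → ℂ) : (Cn n → Cn n) →ₗ[ℂ] (Cn n → ℂ) where
  toFun η := fun x => ∑ i, η x i * pdC i f x
  map_add' η ζ := funext fun x => by
    simp [Pi.add_apply, add_mul, Finset.sum_add_distrib]
  map_smul' c η := funext fun x => by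
    simp [Pi.smul_apply, Finset.mul_sum, mul_assoc]

@[simp] lemma dfL_apply {n : ℕ} (f : Cn n → ℂ) (η : Cn n → Cn n) (x : Cn n) :
    dfL f η x = ∑ i, η x i * pdC i f x := rfl

/-- evaluation of a vector field at 0 -/
noncomputable def ev0 (n : ℕ) : (Cn n → Cn n) →ₗ[ℂ] Cn n := LinearMap.proj (0 : Cn n)

@[simp] lemma ev0_apply {n : ℕ} (η : Cn n → Cn n) : ev0 n η = η 0 := rfl

/-- tangent vector fields form a submodule -/
noncomputable def TX {n : ℕ} (φ : Cn n → ℂ) : Submodule ℂ (Cn n → Cn n) where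
  carrier := {η | TangentVF φ η}
  add_mem' := by
    rintro η ζ ⟨hηa, h₁, h₁a, h₁e⟩ ⟨hζa, h₂, h₂a, h₂e⟩
    refine ⟨fun i => ?_, h₁ + h₂, h₁a.add h₂a, ?_⟩
    · have := (hηa i).fun_add (hζa i)
      simpa [Pi.add_apply] using this
    · filter_upwards [h₁e, h₂e] with x e₁ e₂
      simp only [Pi.add_apply, add_mul, Finset.sum_add_distrib, e₁, e₂]
  zero_mem' := by
    refine ⟨fun i => by simpa using analyticAt_const, 0, analyticAt_const, ?_⟩
    filter_upwards with x; simp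
  smul_mem' := by
    rintro c η ⟨hηa, h, ha, he⟩
    refine ⟨fun i => ?_, c • h, ?_, ?_⟩
    · have : AnalyticAt ℂ (fun x => c * η x i) 0 := analyticAt_const.mul (hηa i)
      simpa [Pi.smul_apply, smul_eq_mul] using this
    · have : AnalyticAt ℂ (fun x => c • h x) 0 := analyticAt_const.fun_smul ha
      exact this
    · filter_upwards [he] with x e
      simp only [Pi.smul_apply, smul_eq_mul, ← Finset.mul_sum, e, mul_assoc]

@[simp] lemma mem_TX {n : ℕ} (φ : Cn n → ℂ) (η : Cn n → Cn n) :
    η ∈ TX φ ↔ TangentVF φ η := Iff.rfl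

end S2aux


/-- The ring `𝒪_n` of holomorphic germs at `0`, as a `ℂ`-subspace of the germ space. -/
noncomputable def On (n : ℕ) : Submodule ℂ (GermC n) :=
  Submodule.span ℂ {g | ∃ f : Cn n → ℂ, AnalyticAt ℂ f 0 ∧ ((f : Cn n → ℂ) : GermC n) = g}

/-- The maximal ideal `𝔪_n ⊆ 𝒪_n`, as a `ℂ`-subspace of the germ space. -/
noncomputable def mn (n : ℕ) : Submodule ℂ (GermC n) :=
  Submodule.span ℂ
    {g | ∃ f : Cn n → ℂ, AnalyticAt ℂ f 0 ∧ f 0 = 0 ∧ ((f : Cn n → ℂ) : GermC n) = g}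

namespace S2aux

/-- the germs of analytic functions form a submodule -/
noncomputable def OnS (n : ℕ) : Submodule ℂ (GermC n) where
  carrier := {g | ∃ f : Cn n → ℂ, AnalyticAt ℂ f 0 ∧ ((f : Cn n → ℂ) : GermC n) = g}
  add_mem' := by
    rintro a b ⟨F, hF, rfl⟩ ⟨G, hG, rfl⟩
    exact ⟨F + G, hF.add hG, (Filter.Germ.coe_add F G)⟩
  zero_mem' := ⟨0, analyticAt_const, rfl⟩
  smul_mem' := by
    rintro c a ⟨F, hF, rfl⟩
    refine ⟨c • F, ?_, (Filter.Germ.coe_smul c F)⟩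
    have : AnalyticAt ℂ (fun x => c • F x) 0 := analyticAt_const.fun_smul hF
    exact this

lemma On_eq (n : ℕ) : On n = OnS n := Submodule.span_eq (OnS n)

noncomputable def mnS (n : ℕ) : Submodule ℂ (GermC n) where
  carrier := {g | ∃ f : Cn n → ℂ, AnalyticAt ℂ f 0 ∧ f 0 = 0 ∧ ((f : Cn n → ℂ) : GermC n) = g}
  add_mem' := by
    rintro a b ⟨F, hF, hF0, rfl⟩ ⟨G, hG, hG0, rfl⟩
    exact ⟨F + G, hF.add hG, by simp [hF0, hG0], (Filter.Germ.coe_add F G)⟩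
  zero_mem' := ⟨0, analyticAt_const, rfl, rfl⟩
  smul_mem' := by
    rintro c a ⟨F, hF, hF0, rfl⟩
    refine ⟨c • F, ?_, by simp [hF0], (Filter.Germ.coe_smul c F)⟩
    have : AnalyticAt ℂ (fun x => c • F x) 0 := analyticAt_const.fun_smul hF
    exact this

lemma mn_eq (n : ℕ) : mn n = mnS n := Submodule.span_eq (mnS n)

lemma dfThetaX_eq {n : ℕ} (φ f : Cn n → ℂ) :
    dfThetaX φ f = (TX φ).map ((germCoe n).comp (dfL f)) := by
  have hset : {g : GermC n | ∃ η, TangentVF φ η ∧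
      ((fun x => ∑ i, η x i * pdC i f x : Cn n → ℂ) : GermC n) = g}
      = ((germCoe n).comp (dfL f)) '' (TX φ : Set (Cn n → Cn n)) := by
    ext g
    constructor
    · rintro ⟨η, hη, rfl⟩; exact ⟨η, hη, rfl⟩
    · rintro ⟨η, hη, rfl⟩; exact ⟨η, hη, rfl⟩
  rw [dfThetaX, hset, ← Submodule.map_span, Submodule.span_eq]

lemma dfThetaX0_eq {n : ℕ} (φ f : Cn n → ℂ) :
    dfThetaX0 φ f = ((TX φ) ⊓ LinearMap.ker (ev0 n)).map ((germCoe n).comp (dfL f)) := by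
  set S : Submodule ℂ (Cn n → Cn n) := (TX φ) ⊓ LinearMap.ker (ev0 n) with hS
  have hset : {g : GermC n | ∃ η, TangentVF φ η ∧ η 0 = 0 ∧
      ((fun x => ∑ i, η x i * pdC i f x : Cn n → ℂ) : GermC n) = g}
      = ((germCoe n).comp (dfL f)) '' (S : Set (Cn n → Cn n)) := by
    ext g
    constructor
    · rintro ⟨η, hη, hη0, rfl⟩
      exact ⟨η, by rw [hS]; exact ⟨hη, by simpa [LinearMap.mem_ker] using hη0⟩, rfl⟩
    · rintro ⟨η, hη', rfl⟩
      rw [hS] at hη'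
      exact ⟨η, hη'.1, by simpa [LinearMap.mem_ker] using hη'.2, rfl⟩
  rw [dfThetaX0, hset, ← Submodule.map_span, Submodule.span_eq]

lemma spanV_eq {n : ℕ} (φ : Cn n → ℂ) :
    Submodule.span ℂ {y : Cn n | ∃ η, TangentVF φ η ∧ η 0 = y} = (TX φ).map (ev0 n) := by
  have hset : {y : Cn n | ∃ η, TangentVF φ η ∧ η 0 = y}
      = (ev0 n) '' (TX φ : Set (Cn n → Cn n)) := by
    ext y; constructor
    · rintro ⟨η, hη, rfl⟩; exact ⟨η, hη, rfl⟩
    · rintro ⟨η, hη, rfl⟩; exact ⟨η, hη, rfl⟩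
  rw [hset, ← Submodule.map_span, Submodule.span_eq]

/-- a continuous linear functional on `ℂ^n` is the sum of its coordinate values -/
lemma clm_apply_pi {n : ℕ} (ℓ : Cn n →L[ℂ] ℂ) (v : Cn n) :
    ℓ v = ∑ i, v i * ℓ (Pi.single i 1) := by
  conv_lhs => rw [← Finset.univ_sum_single v]
  rw [map_sum]
  refine Finset.sum_congr rfl fun i _ => ?_
  have : Pi.single (M := fun _ : Fin n => ℂ) i (v i) = (v i • (Pi.single i 1 : Cn n) : Cn n) := by
    funext j
    rcases eq_or_ne j i with rfl | h
    · simp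
    · simp [Pi.single_eq_of_ne h]
  rw [this, map_smul, smul_eq_mul]

lemma pdC_analyticAt {n : ℕ} {f : Cn n → ℂ} (hf : AnalyticAt ℂ f 0) (i : Fin n) :
    AnalyticAt ℂ (pdC i f) 0 := by
  have h1 : AnalyticAt ℂ (fderiv ℂ f) 0 := hf.fderiv
  have h2 := ((ContinuousLinearMap.apply ℂ ℂ (Pi.single i 1 : Cn n)).analyticAt
    (fderiv ℂ f 0)).comp h1
  exact h2

lemma dfL_analyticAt {n : ℕ} {f : Cn n → ℂ} (hf : AnalyticAt ℂ f 0)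
    {η : Cn n → Cn n} (hη : ∀ i, AnalyticAt ℂ (fun x => η x i) 0) :
    AnalyticAt ℂ (dfL f η) 0 := by
  have : AnalyticAt ℂ (fun x => ∑ i, η x i * pdC i f x) 0 := by
    apply Finset.analyticAt_fun_sum
    intro i _
    exact (hη i).mul (pdC_analyticAt hf i)
  exact this

lemma dfL_zero_at_0 {n : ℕ} {f : Cn n → ℂ} (hiso : ∀ i, pdC i f 0 = 0) (η : Cn n → Cn n) :
    dfL f η 0 = 0 := by
  simp [dfL_apply, hiso]

lemma dfThetaX_le_mn {n : ℕ} (φ f : Cn n → ℂ) (hf : AnalyticAt ℂ f 0)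
    (hiso : ∀ i, pdC i f 0 = 0) : dfThetaX φ f ≤ mn n := by
  rw [dfThetaX_eq, mn_eq]
  rintro g ⟨η, hη, rfl⟩
  exact ⟨dfL f η, dfL_analyticAt hf hη.1, dfL_zero_at_0 hiso η, rfl⟩

lemma dfThetaX0_le_dfThetaX {n : ℕ} (φ f : Cn n → ℂ) : dfThetaX0 φ f ≤ dfThetaX φ f := by
  rw [dfThetaX_eq, dfThetaX0_eq]
  exact Submodule.map_mono inf_le_left

lemma mn_le_On (n : ℕ) : mn n ≤ On n := by
  rw [mn_eq, On_eq]
  rintro g ⟨F, hF, _, rfl⟩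
  exact ⟨F, hF, rfl⟩

lemma mn_le_ker_eval (n : ℕ) : mn n ≤ LinearMap.ker (evalGerm n) := by
  rw [mn_eq]
  rintro g ⟨F, hF, hF0, rfl⟩
  simpa [LinearMap.mem_ker] using hF0

section Tower
variable {M : Type*} [AddCommGroup M] [Module ℂ M]

open Submodule Module

lemma ker_mkQ_comp_subtype (P0 P : Submodule ℂ M) :
    LinearMap.ker (P0.mkQ.comp P.subtype) = Submodule.comap P.subtype P0 := by
  ext x
  simp [LinearMap.mem_ker, Submodule.Quotient.mk_eq_zero]

lemma range_mkQ_comp_subtype (P0 P : Submodule ℂ M) :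
    LinearMap.range (P0.mkQ.comp P.subtype) = P.map P0.mkQ := by
  rw [LinearMap.range_comp, Submodule.range_subtype]

/-- `P.map P0.mkQ ≃ P ⧸ (P0 ∩ P)` -/
noncomputable def mapMkQEquiv (P0 P : Submodule ℂ M) :
    (↥P ⧸ Submodule.comap P.subtype P0) ≃ₗ[ℂ] ↥(P.map P0.mkQ) :=
  (Submodule.quotEquivOfEq _ _ (ker_mkQ_comp_subtype P0 P).symm) ≪≫ₗ
    (P0.mkQ.comp P.subtype).quotKerEquivRange ≪≫ₗ
    (LinearEquiv.ofEq _ _ (range_mkQ_comp_subtype P0 P))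

/-- glue equivalence for towers `P0 ≤ P ≤ Q` -/
noncomputable def glueEquiv (P0 P Q : Submodule ℂ M) (h0 : P0 ≤ P) (h : P ≤ Q) :
    (↥(Submodule.comap Q.subtype P) ⧸
      Submodule.comap (Submodule.comap Q.subtype P).subtype (Submodule.comap Q.subtype P0))
      ≃ₗ[ℂ] (↥P ⧸ Submodule.comap P.subtype P0) := by
  refine Submodule.Quotient.equiv _ _ (Submodule.comapSubtypeEquivOfLe h) ?_
  ext y
  simp only [Submodule.mem_map, Submodule.mem_comap]
  constructor
  · rintro ⟨x, hx, rfl⟩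
    exact hx
  · intro hy
    refine ⟨⟨⟨(y : M), h y.2⟩, y.2⟩, hy, ?_⟩
    rfl

lemma tower_finrank (P0 P Q : Submodule ℂ M) (h0 : P0 ≤ P) (h : P ≤ Q)
    [FiniteDimensional ℂ (↥Q ⧸ Submodule.comap Q.subtype P0)] :
    finrank ℂ (↥Q ⧸ Submodule.comap Q.subtype P0) =
      finrank ℂ (↥Q ⧸ Submodule.comap Q.subtype P) +
        finrank ℂ (↥P ⧸ Submodule.comap P.subtype P0) := by
  set p0 := Submodule.comap Q.subtype P0
  set p := Submodule.comap Q.subtype P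
  have hle : p0 ≤ p := fun x hx => h0 hx
  have e1 : ((↥Q ⧸ p0) ⧸ Submodule.map p0.mkQ p) ≃ₗ[ℂ] (↥Q ⧸ p) :=
    Submodule.quotientQuotientEquivQuotient p0 p hle
  have e2 : (↥(Submodule.map p0.mkQ p)) ≃ₗ[ℂ] (↥P ⧸ Submodule.comap P.subtype P0) :=
    (mapMkQEquiv p0 p).symm ≪≫ₗ glueEquiv P0 P Q h0 h
  have hadd := Submodule.finrank_quotient_add_finrank (M := ↥Q ⧸ p0) (Submodule.map p0.mkQ p)
  rw [e1.finrank_eq, e2.finrank_eq] at hadd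
  omega

lemma tower_findim_up (P0 P Q : Submodule ℂ M) (h0 : P0 ≤ P) (h : P ≤ Q)
    [FiniteDimensional ℂ (↥Q ⧸ Submodule.comap Q.subtype P)]
    [FiniteDimensional ℂ (↥P ⧸ Submodule.comap P.subtype P0)] :
    FiniteDimensional ℂ (↥Q ⧸ Submodule.comap Q.subtype P0) := by
  set p0 := Submodule.comap Q.subtype P0
  set p := Submodule.comap Q.subtype P
  have hle : p0 ≤ p := fun x hx => h0 hx
  have e1 : ((↥Q ⧸ p0) ⧸ Submodule.map p0.mkQ p) ≃ₗ[ℂ] (↥Q ⧸ p) :=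
    Submodule.quotientQuotientEquivQuotient p0 p hle
  have e2 : (↥(Submodule.map p0.mkQ p)) ≃ₗ[ℂ] (↥P ⧸ Submodule.comap P.subtype P0) :=
    (mapMkQEquiv p0 p).symm ≪≫ₗ glueEquiv P0 P Q h0 h
  have h1 : Module.rank ℂ ((↥Q ⧸ p0) ⧸ Submodule.map p0.mkQ p) < Cardinal.aleph0 := by
    rw [e1.rank_eq, Module.rank_lt_aleph0_iff]
    infer_instance
  have h2 : Module.rank ℂ (↥(Submodule.map p0.mkQ p)) < Cardinal.aleph0 := by
    rw [e2.rank_eq, Module.rank_lt_aleph0_iff]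
    infer_instance
  have hr := Submodule.rank_quotient_add_rank (M := ↥Q ⧸ p0) (Submodule.map p0.mkQ p)
  have : Module.rank ℂ (↥Q ⧸ p0) < Cardinal.aleph0 := by
    rw [← hr]
    exact Cardinal.add_lt_aleph0 h1 h2
  exact Module.rank_lt_aleph0_iff.mp this

lemma tower_findim_down (P0 P Q : Submodule ℂ M) (h0 : P0 ≤ P) (h : P ≤ Q)
    [FiniteDimensional ℂ (↥Q ⧸ Submodule.comap Q.subtype P0)] :
    FiniteDimensional ℂ (↥P ⧸ Submodule.comap P.subtype P0) ∧
      FiniteDimensional ℂ (↥Q ⧸ Submodule.comap Q.subtype P) := by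
  set p0 := Submodule.comap Q.subtype P0
  set p := Submodule.comap Q.subtype P
  have hle : p0 ≤ p := fun x hx => h0 hx
  have e1 : ((↥Q ⧸ p0) ⧸ Submodule.map p0.mkQ p) ≃ₗ[ℂ] (↥Q ⧸ p) :=
    Submodule.quotientQuotientEquivQuotient p0 p hle
  have e2 : (↥(Submodule.map p0.mkQ p)) ≃ₗ[ℂ] (↥P ⧸ Submodule.comap P.subtype P0) :=
    (mapMkQEquiv p0 p).symm ≪≫ₗ glueEquiv P0 P Q h0 h
  haveI hQ : FiniteDimensional ℂ (↥Q ⧸ p0) := ‹_›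
  haveI hW : FiniteDimensional ℂ ↥(Submodule.map p0.mkQ p) :=
    FiniteDimensional.finiteDimensional_submodule _
  constructor
  · exact Module.Finite.equiv e2
  · exact Module.Finite.equiv e1

end Tower

section Key

open Set Metric

/-- Key lemma: an analytic vector field annihilating `df` near `0` vanishes at `0`,
provided `f` has an isolated singularity at `0`. -/
lemma key_vanish {n : ℕ} (f : Cn n → ℂ) (hf : AnalyticAt ℂ f 0) (hiso : IsolatedSingAt f)
    (ξ : Cn n → Cn n) (hξ : ∀ i, AnalyticAt ℂ (fun x => ξ x i) 0)
    (hz : ∀ᶠ x in 𝓝 (0 : Cn n), ∑ i, ξ x i * pdC i f x = 0) : ξ 0 = 0 := by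
  classical
  have hξa : AnalyticAt ℂ ξ 0 := by
    have := AnalyticAt.pi (f := fun i => fun x => ξ x i) hξ
    exact this
  -- a good ball
  obtain ⟨r, hr, hball⟩ : ∃ r > 0, ∀ x ∈ ball (0 : Cn n) r,
      AnalyticAt ℂ f x ∧ AnalyticAt ℂ ξ x ∧ (∑ i, ξ x i * pdC i f x = 0) ∧
        ((∀ i, pdC i f x = 0) → x = 0) := by
    have h := (hf.eventually_analyticAt.and (hξa.eventually_analyticAt.and
      (hz.and hiso.2)))
    rw [Metric.eventually_nhds_iff_ball] at h
    obtain ⟨r, hr, h⟩ := h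
    exact ⟨r, hr, fun x hx => ⟨(h x hx).1, (h x hx).2.1, (h x hx).2.2.1, (h x hx).2.2.2⟩⟩
  have hBo : IsOpen (ball (0 : Cn n) r) := isOpen_ball
  -- the derivative identity on the ball
  have hDI : ∀ x ∈ ball (0 : Cn n) r, ∀ v : Cn n,
      fderiv ℂ (fderiv ℂ f) x (ξ x) v = -((fderiv ℂ f x) ((fderiv ℂ ξ x) v)) := by
    intro x hx v
    obtain ⟨hfx, hξx, -, -⟩ := hball x hx
    have hFd : (fun y => (fderiv ℂ f y) (ξ y)) =ᶠ[𝓝 x] (fun _ => (0 : ℂ)) := by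
      filter_upwards [hBo.mem_nhds hx] with y hy
      have : (fderiv ℂ f y) (ξ y) = ∑ i, ξ y i * pdC i f y := clm_apply_pi _ _
      rw [this]
      exact (hball y hy).2.2.1
    have hfderivF : fderiv ℂ (fun y => (fderiv ℂ f y) (ξ y)) x = 0 := by
      rw [hFd.fderiv_eq]
      exact fderiv_const_apply 0
    have hdc : DifferentiableAt ℂ (fderiv ℂ f) x := hfx.fderiv.differentiableAt
    have hdu : DifferentiableAt ℂ ξ x := hξx.differentiableAt
    have hclm := fderiv_clm_apply hdc hdu
    rw [hfderivF] at hclm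
    have happ := congrArg (fun (ℓ : Cn n →L[ℂ] ℂ) => ℓ v) hclm
    simp only [ContinuousLinearMap.zero_apply, ContinuousLinearMap.add_apply,
      ContinuousLinearMap.comp_apply, ContinuousLinearMap.flip_apply] at happ
    have hsym : IsSymmSndFDerivAt ℂ f x :=
      (hfx.contDiffAt : ContDiffAt ℂ 2 f x).isSymmSndFDerivAt (by simp)
    have hswap : fderiv ℂ (fderiv ℂ f) x v (ξ x) = fderiv ℂ (fderiv ℂ f) x (ξ x) v :=
      hsym v (ξ x)
    rw [hswap] at happ
    linear_combination -happ
  -- the integral curve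
  have hCD : ContDiffAt ℝ 1 ξ 0 := (hξa.contDiffAt : ContDiffAt ℂ 1 ξ 0).restrict_scalars ℝ
  obtain ⟨γ, hγ0, ε, hε, hγ⟩ := ContDiffAt.exists_forall_mem_closedBall_exists_eq_forall_mem_Ioo_hasDerivAt₀ hCD (0 : ℝ)
  simp only [zero_sub, zero_add] at hγ
  -- γ stays in the ball for small time
  have hγc0 : ContinuousAt γ 0 := (hγ 0 ⟨by linarith, hε⟩).continuousAt
  have hmem : ball (0 : Cn n) r ∈ 𝓝 (γ 0) := by
    rw [hγ0]; exact hBo.mem_nhds (mem_ball_self hr)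
  obtain ⟨δ0, hδ0, hδ0b⟩ : ∃ δ0 > 0, ∀ t : ℝ, |t| < δ0 → γ t ∈ ball (0 : Cn n) r := by
    have hpre : γ ⁻¹' (ball (0 : Cn n) r) ∈ 𝓝 (0:ℝ) := hγc0.preimage_mem_nhds hmem
    rw [Metric.mem_nhds_iff] at hpre
    obtain ⟨δ0, hδ0, hsub⟩ := hpre
    refine ⟨δ0, hδ0, fun t ht => hsub ?_⟩
    simpa [Real.dist_eq] using ht
  set δ : ℝ := min (ε / 2) (δ0 / 2) with hδdef
  have hδpos : 0 < δ := lt_min (by linarith) (by linarith)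
  have hδε : ∀ t ∈ Icc (-δ) δ, t ∈ Ioo (-ε) ε := by
    intro t ⟨h1, h2⟩
    have : δ ≤ ε / 2 := min_le_left _ _
    constructor <;> nlinarith
  have hδB : ∀ t ∈ Icc (-δ) δ, γ t ∈ ball (0 : Cn n) r := by
    intro t ⟨h1, h2⟩
    have : δ ≤ δ0 / 2 := min_le_right _ _
    exact hδ0b t (by rw [abs_lt]; constructor <;> nlinarith)
  -- the covector along the curve
  set h : ℝ → (Cn n →L[ℂ] ℂ) := fun t => fderiv ℂ f (γ t) with hhdef
  set Φ : ℝ → (Cn n →L[ℂ] Cn n) := fun t => fderiv ℂ ξ (γ t) with hΦdef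
  have hdh : ∀ t ∈ Icc (-δ) δ, HasDerivAt h (-(h t).comp (Φ t)) t := by
    intro t ht
    have htι := hδε t ht
    have htB := hδB t ht
    have hfd : HasFDerivAt (fderiv ℂ f) (fderiv ℂ (fderiv ℂ f) (γ t)) (γ t) :=
      ((hball _ htB).1.fderiv.differentiableAt).hasFDerivAt
    have hcomp := (hfd.restrictScalars ℝ).comp_hasDerivAt t (hγ t htι)
    have hval : (fderiv ℂ (fderiv ℂ f) (γ t)) (ξ (γ t)) = -(h t).comp (Φ t) := by
      ext v
      simp only [ContinuousLinearMap.neg_apply, ContinuousLinearMap.comp_apply]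
      exact hDI (γ t) htB v
    rw [ContinuousLinearMap.coe_restrictScalars'] at hcomp
    rw [← hval]
    exact hcomp
  -- Lipschitz bound
  have hγcont : ContinuousOn γ (Icc (-δ) δ) :=
    fun t ht => ((hγ t (hδε t ht)).continuousAt).continuousWithinAt
  have hΦcont : ContinuousOn Φ (Icc (-δ) δ) := by
    intro t ht
    have h1 : ContinuousAt (fderiv ℂ ξ) (γ t) :=
      ((hball _ (hδB t ht)).2.1.fderiv.continuousAt)
    exact (h1.comp_continuousWithinAt (hγcont t ht))
  obtain ⟨K, hK⟩ := (isCompact_Icc (a := -δ) (b := δ)).exists_bound_of_continuousOn hΦcont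
  set c : ℝ → ℝ := fun t => max (-δ) (min t δ) with hcdef
  have hcmem : ∀ t, c t ∈ Icc (-δ) δ := by
    intro t
    constructor
    · exact le_max_left _ _
    · simp only [hcdef, max_le_iff]
      exact ⟨by linarith [hδpos], min_le_right _ _⟩
  have hceq : ∀ t ∈ Icc (-δ) δ, c t = t := by
    intro t ⟨h1, h2⟩
    simp only [hcdef]
    rw [min_eq_left h2, max_eq_right h1]
  set K' : NNReal := ⟨max K 0, le_max_right _ _⟩ with hK'def
  set v : ℝ → (Cn n →L[ℂ] ℂ) → (Cn n →L[ℂ] ℂ) := fun t y => -(y.comp (Φ (c t))) with hvdef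
  have hlip : ∀ t, LipschitzOnWith K' (v t) Set.univ := by
    intro t
    rw [lipschitzOnWith_iff_dist_le_mul]
    intro y _ y' _
    have : v t y - v t y' = -((y - y').comp (Φ (c t))) := by
      simp only [hvdef]
      ext w
      simp [ContinuousLinearMap.comp_apply]
      ring
    rw [dist_eq_norm, this, norm_neg]
    calc ‖(y - y').comp (Φ (c t))‖ ≤ ‖y - y'‖ * ‖Φ (c t)‖ :=
          ContinuousLinearMap.opNorm_comp_le _ _
      _ ≤ ‖y - y'‖ * K := by
          apply mul_le_mul_of_nonneg_left (hK _ (hcmem t)) (norm_nonneg _)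
      _ ≤ (K' : ℝ) * ‖y - y'‖ := by
          rw [mul_comm]
          apply mul_le_mul_of_nonneg_right (le_max_left _ _) (norm_nonneg _)
      _ = (K' : ℝ) * dist y y' := by rw [dist_eq_norm]
  -- initial value
  have hh0 : h 0 = 0 := by
    have : γ 0 = 0 := hγ0
    rw [hhdef]
    simp only [this]
    ext w
    rw [ContinuousLinearMap.zero_apply, clm_apply_pi]
    have : ∀ i, pdC i f 0 = 0 := hiso.1
    simp [pdC] at this ⊢
    simp [this]
  -- uniqueness of solutions
  have hEq : Set.EqOn h (fun _ => (0 : Cn n →L[ℂ] ℂ)) (Icc 0 δ) := by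
    apply ODE_solution_unique_of_mem_Icc_right (fun t _ => hlip t)
    · intro t ht
      exact ((hdh t ⟨by linarith [ht.1, hδpos], ht.2⟩).continuousAt).continuousWithinAt
    · intro t ht
      have ht' : t ∈ Icc (-δ) δ := ⟨by linarith [ht.1, hδpos], le_of_lt ht.2⟩
      have := (hdh t ht').hasDerivWithinAt (s := Ici t)
      have hvt : v t (h t) = -(h t).comp (Φ t) := by
        rw [hvdef]
        simp only [hceq t ht']
      rw [hvt]
      exact this
    · intro t _; trivial
    · exact continuousOn_const
    · intro t ht
      have hvt : v t ((fun _ : ℝ => (0 : Cn n →L[ℂ] ℂ)) t) = 0 := by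
        simp [hvdef]
      rw [hvt]
      exact hasDerivWithinAt_const _ _ _
    · intro t _; trivial
    · exact hh0
  -- γ is constantly 0 on [0, δ]
  have hγzero : ∀ t ∈ Icc (0:ℝ) δ, γ t = 0 := by
    intro t ht
    have ht' : t ∈ Icc (-δ) δ := ⟨by linarith [ht.1, hδpos], ht.2⟩
    have hB := hδB t ht'
    apply (hball _ hB).2.2.2
    intro i
    have : h t = 0 := hEq ht
    rw [hhdef] at this
    simp only [pdC]
    rw [show fderiv ℂ f (γ t) = 0 from this]
    simp
  -- conclude
  have hu : UniqueDiffWithinAt ℝ (Icc (0:ℝ) δ) 0 :=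
    (uniqueDiffOn_Icc hδpos) 0 ⟨le_rfl, hδpos.le⟩
  have hd1 : HasDerivWithinAt γ (ξ 0) (Icc (0:ℝ) δ) 0 := by
    have := (hγ 0 ⟨by linarith, hε⟩).hasDerivWithinAt (s := Icc (0:ℝ) δ)
    rwa [hγ0] at this
  have hd2 : HasDerivWithinAt γ 0 (Icc (0:ℝ) δ) 0 := by
    have hconst : HasDerivWithinAt (fun _ : ℝ => (0 : Cn n)) 0 (Icc (0:ℝ) δ) 0 :=
      (hasDerivWithinAt_const _ _ _)
    exact hconst.congr (fun y hy => (hγzero y hy)) (by rw [hγ0])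
  exact (hd1.derivWithin hu).symm.trans (hd2.derivWithin hu)

end Key

section Assemble
open Submodule Module

lemma On_mn_quot_rank (n : ℕ) :
    finrank ℂ (↥(On n) ⧸ Submodule.comap (On n).subtype (mn n)) = 1 := by
  classical
  set ev' : ↥(On n) →ₗ[ℂ] ℂ := (evalGerm n).comp (On n).subtype with hev'
  have hker : LinearMap.ker ev' = Submodule.comap (On n).subtype (mn n) := by
    ext x
    simp only [LinearMap.mem_ker, Submodule.mem_comap, hev', LinearMap.comp_apply,
      Submodule.subtype_apply]
    constructor
    · intro hx
      have hx' : (x : GermC n) ∈ OnS n := by rw [← On_eq]; exact x.2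
      obtain ⟨F, hF, hFe⟩ := hx'
      rw [mn_eq]
      refine ⟨F, hF, ?_, hFe⟩
      have : evalGerm n ((F : Cn n → ℂ) : GermC n) = F 0 := evalGerm_coe F
      rw [hFe] at this
      rw [← this]
      exact hx
    · intro hx
      have := mn_le_ker_eval n hx
      simpa [LinearMap.mem_ker] using this
  have hsurj : Function.Surjective ev' := by
    intro c
    refine ⟨⟨((fun _ => c : Cn n → ℂ) : GermC n), ?_⟩, ?_⟩
    · rw [On_eq]; exact ⟨fun _ => c, analyticAt_const, rfl⟩
    · simp [hev']
  have e : (↥(On n) ⧸ Submodule.comap (On n).subtype (mn n)) ≃ₗ[ℂ] ℂ :=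
    (Submodule.quotEquivOfEq _ _ hker.symm) ≪≫ₗ ev'.quotKerEquivOfSurjective hsurj
  rw [e.finrank_eq, Module.finrank_self]

end Assemble

section Main
open Submodule Module
set_option synthInstance.maxHeartbeats 1000000
set_option maxHeartbeats 2000000

variable {n : ℕ}

/-- dimension of `df(Θ_X)/df(Θ_X⁰)` equals `s` -/
lemma AA0_rank (φ f : Cn n → ℂ) (hf : AnalyticAt ℂ f 0) (hiso : IsolatedSingAt f) :
    FiniteDimensional ℂ
        (↥(dfThetaX φ f) ⧸ Submodule.comap (dfThetaX φ f).subtype (dfThetaX0 φ f)) ∧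
      finrank ℂ
        (↥(dfThetaX φ f) ⧸ Submodule.comap (dfThetaX φ f).subtype (dfThetaX0 φ f)) =
      finrank ℂ ↥((TX φ).map (ev0 n)) := by
  classical
  set L : (Cn n → Cn n) →ₗ[ℂ] GermC n := (germCoe n).comp (dfL f) with hL
  set SV : Submodule ℂ (Cn n) := (TX φ).map (ev0 n) with hSV
  set s : ℕ := finrank ℂ ↥SV with hs
  let b : Basis (Fin s) ℂ ↥SV := Module.finBasis ℂ ↥SV
  have hchoice : ∀ j : Fin s, ∃ η, η ∈ TX φ ∧ ev0 n η = (b j : Cn n) := by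
    intro j
    have h2 : (b j : Cn n) ∈ Submodule.map (ev0 n) (TX φ) := (b j).2
    obtain ⟨η, hη, hev⟩ := Submodule.mem_map.mp h2
    exact ⟨η, hη, hev⟩
  choose ηs hηsT hηsev using hchoice
  -- decomposition of TX
  have hT_decomp : TX φ = ((TX φ) ⊓ LinearMap.ker (ev0 n)) ⊔ span ℂ (Set.range ηs) := by
    apply le_antisymm
    · intro η hη
      set y : ↥SV := ⟨ev0 n η, Submodule.mem_map_of_mem hη⟩ with hy
      set c : Fin s → ℂ := fun j => b.repr y j with hc
      have hsumb : ∑ j, c j • (b j : Cn n) = ev0 n η := by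
        have h1 : ∑ j, c j • b j = y := b.sum_repr y
        have h2 := congrArg (Subtype.val) h1
        simpa [hy] using h2
      have hev0 : ev0 n (η - ∑ j, c j • ηs j) = 0 := by
        rw [map_sub, map_sum]
        simp only [map_smul, hηsev]
        rw [hsumb]
        exact sub_self _
      have hmem1 : η - ∑ j, c j • ηs j ∈ (TX φ) ⊓ LinearMap.ker (ev0 n) := by
        refine ⟨?_, ?_⟩
        · exact Submodule.sub_mem _ hη (Submodule.sum_mem _ fun j _ =>
            Submodule.smul_mem _ _ (hηsT j))
        · simpa [LinearMap.mem_ker] using hev0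
      have hmem2 : (∑ j, c j • ηs j) ∈ span ℂ (Set.range ηs) :=
        Submodule.sum_mem _ fun j _ =>
          Submodule.smul_mem _ _ (Submodule.subset_span ⟨j, rfl⟩)
      have : η = (η - ∑ j, c j • ηs j) + ∑ j, c j • ηs j := by abel
      rw [this]
      exact Submodule.add_mem_sup hmem1 hmem2
    · apply sup_le inf_le_left
      rw [Submodule.span_le]
      rintro _ ⟨j, rfl⟩
      exact hηsT j
  have hA_decomp : dfThetaX φ f = dfThetaX0 φ f ⊔ span ℂ (Set.range (fun j => L (ηs j))) := by
    rw [dfThetaX_eq, dfThetaX0_eq]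
    conv_lhs => rw [hT_decomp]
    rw [Submodule.map_sup, Submodule.map_span, ← Set.range_comp]
    rfl
  set A := dfThetaX φ f with hA
  set A0 := dfThetaX0 φ f with hA0
  have hA0A : A0 ≤ A := dfThetaX0_le_dfThetaX φ f
  set Q := Submodule.comap A.subtype A0 with hQ
  set ub : Fin s → ↥A := fun j => ⟨L (ηs j), by
    rw [hA, dfThetaX_eq]; exact Submodule.mem_map_of_mem (hηsT j)⟩ with hub
  set w : Fin s → (↥A ⧸ Q) := fun j => Q.mkQ (ub j) with hw
  -- spanning
  have hspan : span ℂ (Set.range w) = ⊤ := by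
    rw [eq_top_iff]
    rintro m -
    obtain ⟨x, rfl⟩ := Q.mkQ_surjective m
    have hx : (x : GermC n) ∈ A0 ⊔ span ℂ (Set.range (fun j => L (ηs j))) := by
      rw [← hA_decomp]; exact x.2
    rw [Submodule.mem_sup] at hx
    obtain ⟨a0, ha0, v, hv, hxsum⟩ := hx
    rw [mem_span_range_iff_exists_fun] at hv
    obtain ⟨c, hcv⟩ := hv
    have hdiff : x - ∑ j, c j • ub j ∈ Q := by
      rw [hQ, Submodule.mem_comap]
      have : ((x - ∑ j, c j • ub j : ↥A) : GermC n) = a0 := by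
        push_cast [Submodule.coe_sum]
        rw [show ((x : GermC n) = a0 + v) from hxsum.symm, ← hcv]
        simp [hub]
      rw [Submodule.subtype_apply, this]
      exact ha0
    have : Q.mkQ x = ∑ j, c j • w j := by
      have h1 : Q.mkQ (x - ∑ j, c j • ub j) = 0 := by
        rw [Submodule.mkQ_apply, Submodule.Quotient.mk_eq_zero]
        exact hdiff
      have h2 : Q.mkQ x = Q.mkQ (∑ j, c j • ub j) := by
        rw [map_sub] at h1
        have := sub_eq_zero.mp h1
        exact this
      rw [h2, map_sum]
      simp [hw]
    rw [this]
    exact Submodule.sum_mem _ fun j _ =>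
      Submodule.smul_mem _ _ (Submodule.subset_span ⟨j, rfl⟩)
  -- independence
  have hindep : LinearIndependent ℂ w := by
    rw [Fintype.linearIndependent_iff]
    intro c hc
    have hmemQ : (∑ j, c j • ub j) ∈ Q := by
      have h0 : Q.mkQ (∑ j, c j • ub j) = 0 := by
        rw [map_sum]
        simpa [hw] using hc
      rwa [Submodule.mkQ_apply, Submodule.Quotient.mk_eq_zero] at h0
    rw [hQ, Submodule.mem_comap] at hmemQ
    have hval : ((∑ j, c j • ub j : ↥A) : GermC n) = L (∑ j, c j • ηs j) := by
      push_cast [Submodule.coe_sum]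
      rw [map_sum]
      simp [hub, map_smul]
    rw [Submodule.subtype_apply, hval, hA0, dfThetaX0_eq] at hmemQ
    obtain ⟨ζ, hζ, hζL⟩ := hmemQ
    set ξ : Cn n → Cn n := (∑ j, c j • ηs j) - ζ with hξ
    have hξT : ξ ∈ TX φ := by
      apply Submodule.sub_mem
      · exact Submodule.sum_mem _ fun j _ => Submodule.smul_mem _ _ (hηsT j)
      · exact hζ.1
    have hLξ : L ξ = 0 := by
      rw [hξ, map_sub, hζL, sub_self]
    have hev : ∀ᶠ x in 𝓝 (0 : Cn n), ∑ i, ξ x i * pdC i f x = 0 := by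
      have : ((dfL f ξ : Cn n → ℂ) : GermC n) = ((0 : Cn n → ℂ) : GermC n) := by
        simpa [hL] using hLξ
      have := Filter.Germ.coe_eq.mp this
      filter_upwards [this] with x hx
      simpa [dfL_apply] using hx
    have hξ0 : ξ 0 = 0 := key_vanish f hf hiso ξ (hξT.1) hev
    have hζ0 : ζ 0 = 0 := by
      have := hζ.2
      simpa [LinearMap.mem_ker] using this
    have hsum0 : ∑ j, c j • (b j : Cn n) = 0 := by
      have h1 : ev0 n ξ = 0 := by rw [ev0_apply, hξ0]
      rw [hξ, map_sub, map_sum] at h1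
      simp only [map_smul, hηsev] at h1
      rw [show ev0 n ζ = 0 from by rw [ev0_apply, hζ0], sub_zero] at h1
      exact h1
    have hsumSV : ∑ j, c j • b j = 0 := by
      apply Subtype.ext
      push_cast [Submodule.coe_sum]
      simpa using hsum0
    exact fun j => Fintype.linearIndependent_iff.mp b.linearIndependent c hsumSV j
  -- conclude
  have hcard : finrank ℂ ↥(span ℂ (Set.range w)) = s := by
    rw [finrank_span_eq_card hindep, Fintype.card_fin]
  have hfinrank : finrank ℂ (↥A ⧸ Q) = s := by
    rw [← hcard, hspan, finrank_top]
  constructor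
  · have hfg : (⊤ : Submodule ℂ (↥A ⧸ Q)).FG := by
      rw [← hspan]
      exact Submodule.fg_span (Set.finite_range w)
    exact Module.finite_def.mpr hfg
  · exact hfinrank

end Main

end S2aux

open S2aux

/-- The Bruce–Roberts number `μ_BR(f,X) = dim_ℂ 𝒪_n / df(Θ_X)` (as a module). -/
noncomputable abbrev BRQuot {n : ℕ} (φ f : Cn n → ℂ) :=
  (On n) ⧸ (Submodule.comap (On n).subtype (dfThetaX φ f))

/-- The module `𝔪_n / df(Θ_X^0)` whose dimension is the `ℛ_X`-codimension of `f`. -/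
noncomputable abbrev RXQuot {n : ℕ} (φ f : Cn n → ℂ) :=
  (mn n) ⧸ (Submodule.comap (mn n).subtype (dfThetaX0 φ f))

/-- For a hypersurface germ `X = φ⁻¹(0) ⊆ (ℂ^n,0)` and `f` with isolated
singularity at `0` and finite Bruce–Roberts number, `ℛ_X-cod(f) = μ_BR(f,X) + s − 1`. -/
theorem statement2 (n : ℕ) (φ f : Cn n → ℂ)
    (hφ : AnalyticAt ℂ φ 0) (hφ0 : φ 0 = 0)
    (hf : AnalyticAt ℂ f 0) (hf0 : f 0 = 0)
    (hiso : IsolatedSingAt f)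
    (hfin : FiniteDimensional ℂ (BRQuot φ f)) :
    Module.finrank ℂ (RXQuot φ f) =
      Module.finrank ℂ (BRQuot φ f) +
        Module.finrank ℂ (Submodule.span ℂ {y : Cn n | ∃ η, TangentVF φ η ∧ η 0 = y}) - 1 := by
  classical
  have hA_mn : dfThetaX φ f ≤ mn n := dfThetaX_le_mn φ f hf hiso.1
  have hA0_A : dfThetaX0 φ f ≤ dfThetaX φ f := dfThetaX0_le_dfThetaX φ f
  have hA0_mn : dfThetaX0 φ f ≤ mn n := le_trans hA0_A hA_mn
  have hmn_On : mn n ≤ On n := mn_le_On n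
  haveI hfin' : FiniteDimensional ℂ
      (↥(On n) ⧸ Submodule.comap (On n).subtype (dfThetaX φ f)) := hfin
  obtain ⟨hfd1, hfd2⟩ := tower_findim_down (dfThetaX φ f) (mn n) (On n) hA_mn hmn_On
  haveI := hfd1
  haveI := hfd2
  -- Bruce–Roberts number decomposition
  have hBR : Module.finrank ℂ (BRQuot φ f) =
      1 + Module.finrank ℂ
        (↥(mn n) ⧸ Submodule.comap (mn n).subtype (dfThetaX φ f)) := by
    have := tower_finrank (dfThetaX φ f) (mn n) (On n) hA_mn hmn_On
    rwa [On_mn_quot_rank n] at this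
  -- the `s`-dimensional piece
  obtain ⟨hfinAA0, hAA0⟩ := AA0_rank φ f hf hiso
  haveI := hfinAA0
  -- RX decomposition
  haveI hRXfin : FiniteDimensional ℂ
      (↥(mn n) ⧸ Submodule.comap (mn n).subtype (dfThetaX0 φ f)) :=
    tower_findim_up (dfThetaX0 φ f) (dfThetaX φ f) (mn n) hA0_A hA_mn
  have hRX : Module.finrank ℂ (RXQuot φ f) =
      Module.finrank ℂ (↥(mn n) ⧸ Submodule.comap (mn n).subtype (dfThetaX φ f)) +
        Module.finrank ℂ
          (↥(dfThetaX φ f) ⧸ Submodule.comap (dfThetaX φ f).subtype (dfThetaX0 φ f)) :=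
    tower_finrank (dfThetaX0 φ f) (dfThetaX φ f) (mn n) hA0_A hA_mn
  rw [spanV_eq φ]
  rw [hRX, hAA0, hBR]
  omega
end
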